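/- Let n = 2k+1 be odd and let q_0, ..., q_{n-1} be unit quaternions satisfying q_{i+1} = q_i⁻¹ q_{i-1} q_i for all i (indices mod n), such that not all q_i commute pairwise (i.e., there exist i, j with q_i q_j ≠ q_j q_i). Then (q_0 q_1)^n ∈ {1, -1}. -/

import Mathlib

open Quaternion

private lemma cross_core (w1 w2 w3 a1 a2 a3 b1 b2 b3 : ℝ)
    (ha1 : w2 * a3 = w3 * a2) (ha2 : w3 * a1 = w1 * a3) (ha3 : w1 * a2 = w2 * a1)
    (hb1 : w2 * b3 = w3 * b2) (hb2 : w3 * b1 = w1 * b3) (hb3 : w1 * b2 = w2 * b1)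
    (hw : w1 ≠ 0) :
    a2 * b3 = a3 * b2 ∧ a3 * b1 = a1 * b3 ∧ a1 * b2 = a2 * b1 := by
  refine ⟨mul_left_cancel₀ hw ?_, mul_left_cancel₀ hw ?_, mul_left_cancel₀ hw ?_⟩
  · linear_combination b3 * ha3 + b2 * ha2 + a1 * hb1
  · linear_combination -b1 * ha2 + a1 * hb2
  · linear_combination a1 * hb3 - b1 * ha3

private lemma cross_aux (w1 w2 w3 a1 a2 a3 b1 b2 b3 : ℝ)
    (ha1 : w2 * a3 = w3 * a2) (ha2 : w3 * a1 = w1 * a3) (ha3 : w1 * a2 = w2 * a1)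
    (hb1 : w2 * b3 = w3 * b2) (hb2 : w3 * b1 = w1 * b3) (hb3 : w1 * b2 = w2 * b1)
    (hw : ¬ (w1 = 0 ∧ w2 = 0 ∧ w3 = 0)) :
    a2 * b3 = a3 * b2 ∧ a3 * b1 = a1 * b3 ∧ a1 * b2 = a2 * b1 := by
  by_cases h1 : w1 = 0
  · by_cases h2 : w2 = 0
    · have h3 : w3 ≠ 0 := fun h3 => hw ⟨h1, h2, h3⟩
      obtain ⟨c1, c2, c3⟩ := cross_core w3 w1 w2 a3 a1 a2 b3 b1 b2 ha3 ha1 ha2 hb3 hb1 hb2 h3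
      exact ⟨c2, c3, c1⟩
    · obtain ⟨c1, c2, c3⟩ := cross_core w2 w3 w1 a2 a3 a1 b2 b3 b1 ha2 ha3 ha1 hb2 hb3 hb1 h2
      exact ⟨c3, c1, c2⟩
  · exact cross_core w1 w2 w3 a1 a2 a3 b1 b2 b3 ha1 ha2 ha3 hb1 hb2 hb3 h1

private lemma aux_real (z x y : ℍ[ℝ]) (hzx : z * x = x * z) (hzy : z * y = y * z)
    (hxy : x * y ≠ y * x) : z.imI = 0 ∧ z.imJ = 0 ∧ z.imK = 0 := by
  by_contra hz
  apply hxy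
  have hx1 := congrArg QuaternionAlgebra.imI hzx
  have hx2 := congrArg QuaternionAlgebra.imJ hzx
  have hx3 := congrArg QuaternionAlgebra.imK hzx
  have hy1 := congrArg QuaternionAlgebra.imI hzy
  have hy2 := congrArg QuaternionAlgebra.imJ hzy
  have hy3 := congrArg QuaternionAlgebra.imK hzy
  simp only [Quaternion.imI_mul, Quaternion.imJ_mul, Quaternion.imK_mul] at hx1 hx2 hx3 hy1 hy2 hy3
  have ha1 : z.imJ * x.imK = z.imK * x.imJ := by linarith
  have ha2 : z.imK * x.imI = z.imI * x.imK := by linarith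
  have ha3 : z.imI * x.imJ = z.imJ * x.imI := by linarith
  have hb1 : z.imJ * y.imK = z.imK * y.imJ := by linarith
  have hb2 : z.imK * y.imI = z.imI * y.imK := by linarith
  have hb3 : z.imI * y.imJ = z.imJ * y.imI := by linarith
  obtain ⟨c1, c2, c3⟩ := cross_aux z.imI z.imJ z.imK x.imI x.imJ x.imK y.imI y.imJ y.imK
    ha1 ha2 ha3 hb1 hb2 hb3 hz
  ext
  · simp only [Quaternion.re_mul]; ring
  · simp only [Quaternion.imI_mul]; linear_combination 2 * c1
  · simp only [Quaternion.imJ_mul]; linear_combination 2 * c2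
  · simp only [Quaternion.imK_mul]; linear_combination 2 * c3

/-- Let `n = 2k+1` be odd and `q_0,…,q_{n-1}` unit quaternions (indices mod `n`) with
`q_{i+1} = q_i⁻¹ q_{i-1} q_i` for all `i`, not all commuting pairwise.
Then `(q_0 q_1)^n ∈ {1, -1}`. -/
theorem stmt_13 (k : ℕ) (q : ZMod (2 * k + 1) → ℍ[ℝ])
    (hnorm : ∀ i, ‖q i‖ = 1)
    (hrel : ∀ i : ZMod (2 * k + 1), q (i + 1) = (q i)⁻¹ * q (i - 1) * q i)
    (hnc : ∃ i j : ZMod (2 * k + 1), q i * q j ≠ q j * q i) :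
    (q 0 * q 1) ^ (2 * k + 1) = 1 ∨ (q 0 * q 1) ^ (2 * k + 1) = -1 := by
  have hq0 : ∀ i, q i ≠ 0 := by
    intro i h
    have := hnorm i
    rw [h, norm_zero] at this
    norm_num at this
  -- the product q i * q (i+1) is constant
  have keyN : ∀ m : ℕ, q (m : ZMod (2 * k + 1)) * q ((m : ZMod (2 * k + 1)) + 1)
      = q 0 * q 1 := by
    intro m
    induction m with
    | zero => norm_num
    | succ m ih =>
      have h := hrel ((m : ZMod (2 * k + 1)) + 1)
      rw [add_sub_cancel_right] at h
      have h2 : q ((m : ZMod (2 * k + 1)) + 1) * q ((m : ZMod (2 * k + 1)) + 1 + 1)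
          = q (m : ZMod (2 * k + 1)) * q ((m : ZMod (2 * k + 1)) + 1) := by
        rw [h, ← mul_assoc, ← mul_assoc, mul_inv_cancel₀ (hq0 _), one_mul]
      push_cast
      rw [h2, ih]
  have key : ∀ i : ZMod (2 * k + 1), q i * q (i + 1) = q 0 * q 1 := by
    intro i
    obtain ⟨m, rfl⟩ := ZMod.natCast_zmod_surjective i
    exact keyN m
  -- conjugation by p := q 0 * q 1 shifts indices by 2
  have shift : ∀ i : ZMod (2 * k + 1), q i * (q 0 * q 1) = (q 0 * q 1) * q (i + 2) := by
    intro i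
    calc q i * (q 0 * q 1) = q i * (q (i + 1) * q (i + 1 + 1)) := by rw [key (i + 1)]
      _ = (q i * q (i + 1)) * q (i + 1 + 1) := by rw [mul_assoc]
      _ = (q 0 * q 1) * q (i + 2) := by rw [key i]; ring_nf
  have shiftn : ∀ (m : ℕ) (i : ZMod (2 * k + 1)),
      q i * (q 0 * q 1) ^ m = (q 0 * q 1) ^ m * q (i + (2 * m : ℕ)) := by
    intro m
    induction m with
    | zero => intro i; simp
    | succ m ih =>
      intro i
      have hidx : i + ((2 * m : ℕ) : ZMod (2 * k + 1)) + 2 = i + ((2 * (m + 1) : ℕ)) := by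
        push_cast; ring
      calc q i * (q 0 * q 1) ^ (m + 1)
          = (q i * (q 0 * q 1) ^ m) * (q 0 * q 1) := by rw [pow_succ, mul_assoc]
        _ = (q 0 * q 1) ^ m * (q (i + (2 * m : ℕ)) * (q 0 * q 1)) := by rw [ih i, mul_assoc]
        _ = (q 0 * q 1) ^ m * ((q 0 * q 1) * q (i + (2 * m : ℕ) + 2)) := by rw [shift]
        _ = (q 0 * q 1) ^ (m + 1) * q (i + (2 * (m + 1) : ℕ)) := by
            rw [hidx, pow_succ, mul_assoc, mul_assoc]; rw [← mul_assoc (q 0) (q 1)]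
  have comm : ∀ i : ZMod (2 * k + 1),
      q i * (q 0 * q 1) ^ (2 * k + 1) = (q 0 * q 1) ^ (2 * k + 1) * q i := by
    intro i
    have h := shiftn (2 * k + 1) i
    rwa [show ((2 * (2 * k + 1) : ℕ) : ZMod (2 * k + 1)) = 0 by
        rw [Nat.cast_mul, ZMod.natCast_self, mul_zero], add_zero] at h
  obtain ⟨i, j, hij⟩ := hnc
  obtain ⟨h1, h2, h3⟩ := aux_real ((q 0 * q 1) ^ (2 * k + 1)) (q i) (q j)
    ((comm i).symm) ((comm j).symm) hij
  have hre : (q 0 * q 1) ^ (2 * k + 1) = ((((q 0 * q 1) ^ (2 * k + 1)).re : ℝ) : ℍ[ℝ]) := by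
    ext <;> simp [h1, h2, h3]
  have hnp : ‖(q 0 * q 1) ^ (2 * k + 1)‖ = 1 := by
    rw [norm_pow, norm_mul, hnorm, hnorm, one_mul, one_pow]
  rw [hre, Quaternion.norm_coe, Real.norm_eq_abs] at hnp
  rcases (abs_eq (by norm_num : (0:ℝ) ≤ 1)).mp hnp with h | h
  · left; rw [hre, h]; norm_num
  · right; rw [hre, h]; norm_num
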